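/- The λ-permutohedron P_λ^m has the integer decomposition property: for every positive integer t and every lattice point p ∈ tP_λ^m ∩ ℤ^m, there exist lattice points v_1, ..., v_t ∈ P_λ^m ∩ ℤ^m with p = v_1 + ... + v_t. -/

import Mathlib

open Finset
open scoped Pointwise
namespace PermIDP

def FF (Λ : ℕ → ℤ) (k : ℕ) : ℤ := ∑ n ∈ Finset.range k, Λ n

theorem FF_succ (Λ : ℕ → ℤ) (k : ℕ) : FF Λ (k + 1) = FF Λ k + Λ k :=
  Finset.sum_range_succ _ _

theorem FF_mono {Λ : ℕ → ℤ} (h0 : ∀ n, 0 ≤ Λ n) : Monotone (FF Λ) := by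
  intro a b hab
  rw [FF, FF, ← Finset.sum_range_add_sum_Ico _ hab]
  have : (0:ℤ) ≤ ∑ n ∈ Finset.Ico a b, Λ n := Finset.sum_nonneg fun n _ => h0 n
  omega

theorem FF_window (Λ : ℕ → ℤ) (a b : ℕ) (hab : a ≤ b) :
    FF Λ b - FF Λ a = ∑ n ∈ Finset.Ico a b, Λ n := by
  rw [FF, FF, ← Finset.sum_range_add_sum_Ico _ hab]; ring


/-- Any subset sum of an antitone nonnegative sequence is at most the prefix sum
of the same cardinality. -/
theorem subsetSum_le {Λ : ℕ → ℤ} (hA : Antitone Λ) (h0 : ∀ n, 0 ≤ Λ n) (S : Finset ℕ) :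
    ∑ n ∈ S, Λ n ≤ FF Λ S.card := by
  induction S using Finset.strongInduction with
  | _ S ih =>
    rcases S.eq_empty_or_nonempty with rfl | hne
    · simp [FF]
    · set j := S.max' hne with hj
      have hjS : j ∈ S := S.max'_mem hne
      have hsub : S ⊆ Finset.range (j + 1) := by
        intro a ha
        simp only [Finset.mem_range]
        exact Nat.lt_succ_of_le (S.le_max' a ha)
      have hcard : S.card ≤ j + 1 := by
        simpa using Finset.card_le_card hsub
      have hcard1 : 1 ≤ S.card := Finset.card_pos.2 hne
      have key : ∑ n ∈ S.erase j, Λ n ≤ FF Λ (S.card - 1) := by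
        have := ih (S.erase j) (Finset.erase_ssubset hjS)
        rwa [Finset.card_erase_of_mem hjS] at this
      have hΛj : Λ j ≤ Λ (S.card - 1) := hA (by omega)
      have hsum : ∑ n ∈ S.erase j, Λ n + Λ j = ∑ n ∈ S, Λ n := Finset.sum_erase_add _ _ hjS
      have hFF : FF Λ (S.card - 1) + Λ (S.card - 1) = FF Λ S.card := by
        conv_rhs => rw [show S.card = S.card - 1 + 1 by omega]
        rw [FF_succ]
      omega

theorem downward_closed_eq_range {D : Finset ℕ}
    (h : ∀ a b : ℕ, a ≤ b → b ∈ D → a ∈ D) : D = Finset.range D.card := by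
  have key : ∀ k, k ∈ D ↔ k < D.card := by
    intro k
    constructor
    · intro hk
      have hsub : Finset.range (k + 1) ⊆ D := fun a ha =>
        h a k (Nat.lt_succ_iff.mp (Finset.mem_range.mp ha)) hk
      have := Finset.card_le_card hsub
      simpa using this
    · intro hk
      by_contra hkD
      have hsub : D ⊆ Finset.range k := by
        intro a ha
        simp only [Finset.mem_range]
        by_contra hak
        exact hkD (h k a (by omega) ha)
      have := Finset.card_le_card hsub
      simp only [Finset.card_range] at this
      omega
  ext k; simp [key]

/-- The Gale–Ryser peeling step. -/
theorem GR_step {m : ℕ} {Λ : ℕ → ℤ} (hA : Antitone Λ) (h0 : ∀ n, 0 ≤ Λ n)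
    (hsupp : ∀ n, m ≤ n → Λ n = 0)
    {q : ℕ → ℤ} (hq0 : ∀ n, 0 ≤ q n)
    (hQ : ∀ S : Finset ℕ, S ⊆ Finset.range m → ∑ n ∈ S, q n ≤ FF Λ S.card)
    (hTot : ∑ n ∈ Finset.range m, q n = FF Λ m) :
    ∃ T : Finset ℕ, T ⊆ Finset.range m ∧
      T.card = ((Finset.range m).filter (fun n => 1 ≤ Λ n)).card ∧
      (∀ n ∈ T, 1 ≤ q n) ∧
      (∀ S : Finset ℕ, S ⊆ Finset.range m →
        ∑ n ∈ S, (q n - if n ∈ T then 1 else 0) ≤ FF (fun n => max (Λ n - 1) 0) S.card) ∧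
      (∑ n ∈ Finset.range m, (q n - if n ∈ T then 1 else 0)
        = FF (fun n => max (Λ n - 1) 0) m) := by
  classical
  set D : Finset ℕ := (Finset.range m).filter (fun n => 1 ≤ Λ n) with hD
  set K : ℕ := D.card with hK
  have hDdc : ∀ a b : ℕ, a ≤ b → b ∈ D → a ∈ D := by
    intro a b hab hb
    simp only [hD, Finset.mem_filter, Finset.mem_range] at hb ⊢
    exact ⟨by omega, le_trans hb.2 (hA hab)⟩
  have hDrange : D = Finset.range K := downward_closed_eq_range hDdc
  have hKm : K ≤ m := by
    have : D ⊆ Finset.range m := Finset.filter_subset _ _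
    simpa [hK] using Finset.card_le_card this
  have hDmem : ∀ n, n ∈ D ↔ n < K := by
    intro n; rw [hDrange]; simp
  have hΛpos : ∀ n, n < K → 1 ≤ Λ n := by
    intro n hn
    have := (hDmem n).2 hn
    simp only [hD, Finset.mem_filter] at this
    exact this.2
  have hΛzero : ∀ n, K ≤ n → Λ n = 0 := by
    intro n hn
    rcases Nat.lt_or_ge n m with h | h
    · have hnD : n ∉ D := fun hc => by
        have := (hDmem n).1 hc; omega
      simp only [hD, Finset.mem_filter, Finset.mem_range] at hnD
      have := h0 n
      omega
    · exact hsupp n h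
  -- prefix sums of the reduced Λ'
  have hFF' : ∀ s, s ≤ m → FF (fun n => max (Λ n - 1) 0) s = FF Λ s - min s K := by
    intro s hs
    have hpt : ∀ n, max (Λ n - 1) 0 = Λ n - (if 1 ≤ Λ n then 1 else 0) := by
      intro n; have := h0 n; split <;> omega
    have h1 : FF (fun n => max (Λ n - 1) 0) s
        = FF Λ s - ∑ n ∈ Finset.range s, (if 1 ≤ Λ n then (1:ℤ) else 0) := by
      rw [FF, FF, Finset.sum_congr rfl (fun n _ => hpt n), Finset.sum_sub_distrib]
    have h2 : (Finset.range s).filter (fun n => 1 ≤ Λ n) = Finset.range (min s K) := by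
      ext n
      simp only [Finset.mem_filter, Finset.mem_range, lt_min_iff]
      constructor
      · intro ⟨hns, hΛ⟩
        refine ⟨hns, ?_⟩
        have : n ∈ D := by
          simp only [hD, Finset.mem_filter, Finset.mem_range]
          exact ⟨by omega, hΛ⟩
        exact (hDmem n).1 this
      · intro ⟨hns, hnK⟩
        exact ⟨hns, hΛpos n hnK⟩
    have h3 : ∑ n ∈ Finset.range s, (if 1 ≤ Λ n then (1:ℤ) else 0)
        = ((min s K : ℕ) : ℤ) := by
      rw [Finset.sum_boole, h2]
      simp
    rw [h1, h3]
  have hFFconst : ∀ a b, K ≤ a → a ≤ b → FF Λ b = FF Λ a := by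
    intro a b ha hab
    have := FF_window Λ a b hab
    have hz : ∑ n ∈ Finset.Ico a b, Λ n = 0 :=
      Finset.sum_eq_zero fun n hn => hΛzero n (le_trans ha (Finset.mem_Ico.mp hn).1)
    omega
  rcases Nat.eq_zero_or_pos K with hK0 | hKpos
  · -- trivial case: Λ ≡ 0 on range m, peel empty layer
    refine ⟨∅, Finset.empty_subset _, by simp [hK0, ← hK], by simp, ?_, ?_⟩
    · intro S hS
      have := hQ S hS
      have hcard : S.card ≤ m := by
        simpa using Finset.card_le_card hS
      rw [hFF' S.card hcard]
      simp only [Finset.notMem_empty, if_false, sub_zero]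
      omega
    · rw [hFF' m le_rfl]
      simp only [Finset.notMem_empty, if_false, sub_zero]
      omega
  · -- main case
    obtain ⟨T, hTP, hTmax⟩ := Finset.exists_max_image
      ((Finset.range m).powersetCard K) (fun U => ∑ n ∈ U, q n)
      (Finset.powersetCard_nonempty.2 (by simpa using hKm))
    obtain ⟨hTsub, hTcard⟩ := Finset.mem_powersetCard.mp hTP
    have hswap : ∀ u ∈ T, ∀ w, w ∈ Finset.range m → w ∉ T → q w ≤ q u := by
      intro u hu w hw hwT
      have hwe : w ∉ T.erase u := fun hc => hwT (Finset.mem_of_mem_erase hc)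
      have hT' : insert w (T.erase u) ∈ (Finset.range m).powersetCard K := by
        rw [Finset.mem_powersetCard]
        constructor
        · intro x hx
          rcases Finset.mem_insert.mp hx with rfl | hx
          · exact hw
          · exact hTsub (Finset.mem_of_mem_erase hx)
        · rw [Finset.card_insert_of_notMem hwe, Finset.card_erase_of_mem hu, hTcard]
          omega
      have hle := hTmax _ hT'
      rw [Finset.sum_insert hwe] at hle
      have herase : ∑ n ∈ T.erase u, q n + q u = ∑ n ∈ T, q n :=
        Finset.sum_erase_add _ _ hu
      omega
    have hTne : T.Nonempty := Finset.card_pos.mp (by omega)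
    obtain ⟨u₀, hu₀, hu₀min⟩ := T.exists_min_image q hTne
    set c : ℤ := q u₀ with hc
    have hcle : ∀ n ∈ T, c ≤ q n := hu₀min
    have hout : ∀ w, w ∈ Finset.range m → w ∉ T → q w ≤ c :=
      fun w hw hwT => hswap u₀ hu₀ w hw hwT
    have hc1 : 1 ≤ c := by
      by_contra hcon
      have hc0 : c = 0 := by have := hq0 u₀; omega
      have hzero : ∀ w ∈ Finset.range m, w ∉ T → q w = 0 := by
        intro w hw hwT
        have h1 := hout w hw hwT
        have h2 := hq0 w
        omega
      have h1 : ∑ n ∈ Finset.range m, q n = ∑ n ∈ T, q n :=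
        (Finset.sum_subset hTsub (fun x hx hxT => hzero x hx hxT)).symm
      have h2 : ∑ n ∈ T.erase u₀, q n + q u₀ = ∑ n ∈ T, q n :=
        Finset.sum_erase_add _ _ hu₀
      have h3 : ∑ n ∈ T.erase u₀, q n ≤ FF Λ (K - 1) := by
        have := hQ (T.erase u₀) ((Finset.erase_subset _ _).trans hTsub)
        rwa [Finset.card_erase_of_mem hu₀, hTcard] at this
      have h4 : FF Λ (K - 1) + Λ (K - 1) = FF Λ K := by
        conv_rhs => rw [show K = K - 1 + 1 by omega]
        rw [FF_succ]
      have h5 : 1 ≤ Λ (K - 1) := hΛpos _ (by omega)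
      have h6 : FF Λ m = FF Λ K := hFFconst K m le_rfl hKm
      omega
    -- the main estimate
    have hsum_ite : ∀ S : Finset ℕ,
        ∑ n ∈ S, (q n - if n ∈ T then 1 else 0) = ∑ n ∈ S, q n - ((S ∩ T).card : ℤ) := by
      intro S
      rw [Finset.sum_sub_distrib]
      congr 1
      rw [Finset.sum_ite_mem]
      simp
    have hmain : ∀ S : Finset ℕ, S ⊆ Finset.range m →
        ∑ n ∈ S, q n - ((S ∩ T).card : ℤ) ≤ FF Λ S.card - min S.card K := by
      intro S hS
      set s := S.card with hs
      set e := (S ∩ T).card with he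
      have hes : e ≤ s := Finset.card_le_card Finset.inter_subset_left
      have heK : e ≤ K := by
        have h := Finset.card_le_card (Finset.inter_subset_right : S ∩ T ⊆ T)
        omega
      have hsm : s ≤ m := by simpa [hs] using Finset.card_le_card hS
      have hdiffcard : (S \ T).card = s - e := by
        have := Finset.card_sdiff_add_card_inter S T
        omega
      have hTdiffcard : (T \ S).card = K - e := by
        have := Finset.card_sdiff_add_card_inter T S
        rw [Finset.inter_comm] at this
        omega
      have hTSq : (↑(K - e) : ℤ) * c ≤ ∑ n ∈ T \ S, q n := by
        calc (↑(K - e) : ℤ) * c = (T \ S).card • c := by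
              rw [hTdiffcard]; simp [nsmul_eq_mul]
        _ ≤ ∑ n ∈ T \ S, q n :=
              Finset.card_nsmul_le_sum _ _ _ (fun n hn => hcle n (Finset.mem_sdiff.mp hn).1)
      rcases Nat.lt_or_ge s K with hsK | hKs
      · -- case s < K
        have hminsK : min s K = s := by omega
        rcases Nat.eq_zero_or_pos s with hs0 | hs1
        · have h := hQ S hS
          rw [← hs] at h
          omega
        rcases le_or_gt (c + 1) (Λ (s - 1)) with hcase | hcase
        · -- subcase (II)
          have h1 : ∑ n ∈ S ∩ T, q n ≤ FF Λ e :=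
            hQ _ (Finset.inter_subset_left.trans hS)
          have h2 : ∑ n ∈ S \ T, q n ≤ (↑(s - e) : ℤ) * c := by
            calc ∑ n ∈ S \ T, q n ≤ (S \ T).card • c :=
                  Finset.sum_le_card_nsmul _ _ _ (fun n hn =>
                    hout n (hS (Finset.mem_sdiff.mp hn).1) (Finset.mem_sdiff.mp hn).2)
            _ = (↑(s - e) : ℤ) * c := by rw [hdiffcard]; simp [nsmul_eq_mul]
          have hsplit : ∑ n ∈ S ∩ T, q n + ∑ n ∈ S \ T, q n = ∑ n ∈ S, q n := by
            have hu : (S ∩ T) ∪ (S \ T) = S := by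
              ext x; simp only [Finset.mem_union, Finset.mem_inter, Finset.mem_sdiff]; tauto
            have hd : Disjoint (S ∩ T) (S \ T) := by
              rw [Finset.disjoint_left]
              intro a ha hb
              exact (Finset.mem_sdiff.mp hb).2 (Finset.mem_inter.mp ha).2
            rw [← Finset.sum_union hd, hu]
          have hwin : (↑(s - e) : ℤ) * Λ (s - 1) ≤ FF Λ s - FF Λ e := by
            rw [FF_window Λ e s hes]
            calc (↑(s - e) : ℤ) * Λ (s - 1) = (Finset.Ico e s).card • Λ (s - 1) := by
                  rw [Nat.card_Ico]; simp [nsmul_eq_mul]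
            _ ≤ ∑ n ∈ Finset.Ico e s, Λ n :=
                  Finset.card_nsmul_le_sum _ _ _ (fun n hn =>
                    hA (by have := (Finset.mem_Ico.mp hn).2; omega))
          have hcast : (↑(s - e) : ℤ) = (s : ℤ) - e := by
            push_cast [Nat.cast_sub hes]; ring
          have hP : (↑(s - e) : ℤ) * (c + 1) ≤ FF Λ s - FF Λ e :=
            le_trans (mul_le_mul_of_nonneg_left hcase (by positivity)) hwin
          have hexp : (↑(s - e) : ℤ) * (c + 1) = (↑(s - e) : ℤ) * c + ↑(s - e) := by ring
          have hgoal : min s K = s := hminsK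
          rw [hgoal]
          linarith [h1, h2, hsplit, hP, hexp, hcast]
        · -- subcase (I)
          have h1 : ∑ n ∈ S, q n + ∑ n ∈ T \ S, q n ≤ FF Λ m := by
            have hdisj : Disjoint S (T \ S) := Finset.disjoint_sdiff
            have hsub2 : S ∪ (T \ S) ⊆ Finset.range m := by
              intro x hx
              rcases Finset.mem_union.mp hx with hx | hx
              · exact hS hx
              · exact hTsub (Finset.mem_sdiff.mp hx).1
            have := hQ _ hsub2
            rw [Finset.sum_union hdisj] at this
            calc ∑ n ∈ S, q n + ∑ n ∈ T \ S, q n ≤ FF Λ (S ∪ (T \ S)).card := this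
            _ ≤ FF Λ m := FF_mono h0 (by simpa using Finset.card_le_card hsub2)
          have hΛsc : Λ s ≤ c :=
            le_trans (hA (show s - 1 ≤ s by omega)) (by omega)
          have hwin2 : FF Λ m - FF Λ s ≤ (↑(K - s) : ℤ) * c := by
            rw [hFFconst K m le_rfl hKm, FF_window Λ s K (by omega)]
            calc ∑ n ∈ Finset.Ico s K, Λ n ≤ (Finset.Ico s K).card • c :=
                  Finset.sum_le_card_nsmul _ _ _ (fun n hn =>
                    le_trans (hA (Finset.mem_Ico.mp hn).1) hΛsc)
            _ = (↑(K - s) : ℤ) * c := by rw [Nat.card_Ico]; simp [nsmul_eq_mul]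
          have hcast1 : (↑(K - e) : ℤ) = (K : ℤ) - e := by push_cast [Nat.cast_sub heK]; ring
          have hcast2 : (↑(K - s) : ℤ) = (K : ℤ) - s := by
            push_cast [Nat.cast_sub (le_of_lt hsK)]; ring
          have hmul : ((e : ℤ) - s) * c ≤ ((e : ℤ) - s) * 1 :=
            mul_le_mul_of_nonpos_left hc1 (by omega)
          have hUV : (↑(K - s) : ℤ) * c - (↑(K - e) : ℤ) * c = ((e:ℤ) - s) * c := by
            rw [hcast1, hcast2]; ring
          rw [hminsK]
          linarith [h1, hTSq, hwin2, hUV, hmul]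
      · -- case K ≤ s
        have hminsK : min s K = K := by omega
        have hdisj : Disjoint S (T \ S) := Finset.disjoint_sdiff
        have hsub2 : S ∪ (T \ S) ⊆ Finset.range m := by
          intro x hx
          rcases Finset.mem_union.mp hx with hx | hx
          · exact hS hx
          · exact hTsub (Finset.mem_sdiff.mp hx).1
        have hcardu : (S ∪ (T \ S)).card = s + (K - e) := by
          rw [Finset.card_union_of_disjoint hdisj, hTdiffcard]
        have h1 : ∑ n ∈ S, q n + ∑ n ∈ T \ S, q n ≤ FF Λ (s + (K - e)) := by
          have := hQ _ hsub2
          rw [Finset.sum_union hdisj, hcardu] at this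
          exact this
        have h2 : FF Λ (s + (K - e)) = FF Λ s := hFFconst s (s + (K - e)) hKs (by omega)
        have hcast1 : (↑(K - e) : ℤ) = (K : ℤ) - e := by push_cast [Nat.cast_sub heK]; ring
        have hm2 : (↑(K - e) : ℤ) * 1 ≤ (↑(K - e) : ℤ) * c :=
          mul_le_mul_of_nonneg_left hc1 (by positivity)
        rw [hminsK]
        linarith [h1, hTSq, h2, hcast1, hm2]
    refine ⟨T, hTsub, by rw [hTcard], fun n hn => le_trans hc1 (hcle n hn), ?_, ?_⟩
    · intro S hS
      rw [hsum_ite S, hFF' S.card (by simpa using Finset.card_le_card hS)]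
      exact hmain S hS
    · rw [hsum_ite _, hFF' m le_rfl]
      have hint : Finset.range m ∩ T = T := Finset.inter_eq_right.mpr hTsub
      rw [hint, hTcard]
      have : min m K = K := by omega
      rw [this]
      omega


/-- Iterated Gale–Ryser peeling: a dominated `q` decomposes into indicator layers
whose sizes are the conjugate parts of `Λ`. -/
theorem layers {m : ℕ} : ∀ (L : ℕ) (Λ : ℕ → ℤ), Antitone Λ → (∀ n, 0 ≤ Λ n) →
    (∀ n, m ≤ n → Λ n = 0) → (∀ n, Λ n ≤ (L:ℤ)) →
    ∀ (q : ℕ → ℤ), (∀ n, 0 ≤ q n) →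
    (∀ S : Finset ℕ, S ⊆ Finset.range m → ∑ n ∈ S, q n ≤ FF Λ S.card) →
    (∑ n ∈ Finset.range m, q n = FF Λ m) →
    ∃ χ : ℕ → Finset ℕ, (∀ k, χ k ⊆ Finset.range m) ∧
      (∀ k, (χ k).card = ((Finset.range m).filter (fun n => (k:ℤ) + 1 ≤ Λ n)).card) ∧
      (∀ n, n < m → q n = ∑ k ∈ Finset.range L, (if n ∈ χ k then (1:ℤ) else 0)) := by
  intro L
  induction L with
  | zero =>
    intro Λ hA h0 hsupp hbound q hq0 hQ hTot
    have hΛ0 : ∀ n, Λ n = 0 := fun n => le_antisymm (by simpa using hbound n) (h0 n)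
    have hFF0 : ∀ k, FF Λ k = 0 := fun k => Finset.sum_eq_zero (fun n _ => hΛ0 n)
    have hqz : ∀ n, n < m → q n = 0 := by
      intro n hn
      have h1 := hQ {n} (by simpa using hn)
      rw [Finset.sum_singleton, hFF0] at h1
      have := hq0 n; omega
    refine ⟨fun _ => ∅, fun _ => Finset.empty_subset _, fun k => ?_, fun n hn => by
      simp [hqz n hn]⟩
    rw [Finset.card_empty]
    symm
    rw [Finset.card_eq_zero, Finset.filter_eq_empty_iff]
    intro n _
    rw [hΛ0 n]
    push_cast
    omega
  | succ L ih =>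
    intro Λ hA h0 hsupp hbound q hq0 hQ hTot
    obtain ⟨T, hTsub, hTcard, hTpos, hQ', hTot'⟩ := GR_step hA h0 hsupp hq0 hQ hTot
    set Λ' : ℕ → ℤ := fun n => max (Λ n - 1) 0 with hΛ'
    set q' : ℕ → ℤ := fun n => q n - if n ∈ T then 1 else 0 with hq'
    have hA' : Antitone Λ' := fun a b hab => by
      have := hA hab
      simp only [hΛ']
      exact max_le_max (by omega) le_rfl
    have h0' : ∀ n, 0 ≤ Λ' n := fun n => le_max_right _ _
    have hsupp' : ∀ n, m ≤ n → Λ' n = 0 := fun n hn => by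
      simp [hΛ', hsupp n hn]
    have hbound' : ∀ n, Λ' n ≤ (L:ℤ) := by
      intro n
      have h1 := hbound n
      have h2 : (0:ℤ) ≤ (L:ℤ) := by positivity
      simp only [hΛ']
      push_cast at h1 ⊢
      omega
    have hq0' : ∀ n, 0 ≤ q' n := by
      intro n
      by_cases hn : n ∈ T
      · have := hTpos n hn; simp only [hq', hn, if_true]; omega
      · have := hq0 n; simp only [hq', hn, if_false]; omega
    obtain ⟨χ', hχ'sub, hχ'card, hχ'sum⟩ := ih Λ' hA' h0' hsupp' hbound' q' hq0' hQ' hTot'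
    refine ⟨fun k => Nat.casesOn k T (fun k' => χ' k'), ?_, ?_, ?_⟩
    · intro k
      cases k with
      | zero => exact hTsub
      | succ k' => exact hχ'sub k'
    · intro k
      cases k with
      | zero =>
        show T.card = _
        simp only [Nat.cast_zero, zero_add]
        exact hTcard
      | succ k' =>
        show (χ' k').card = _
        rw [hχ'card k']
        congr 1
        apply Finset.filter_congr
        intro n _
        simp only [hΛ']
        rw [le_max_iff]
        push_cast
        constructor
        · rintro (h | h) <;> omega
        · intro h; left; omega
    · intro n hn
      rw [Finset.sum_range_succ']
      have hrec := hχ'sum n hn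
      have : q n = q' n + (if n ∈ T then 1 else 0) := by simp [hq']
      rw [this, hrec]
      exact congrArg₂ (· + ·) (Finset.sum_congr rfl fun k _ => rfl) rfl

theorem sum_range_add' {M : Type*} [AddCommMonoid M] (f : ℕ → M) (n c : ℕ) :
    ∑ k ∈ Finset.range (n + c), f k
      = ∑ k ∈ Finset.range n, f k + ∑ j ∈ Finset.range c, f (n + j) := by
  induction c with
  | zero => simp
  | succ c ih =>
    rw [show n + (c + 1) = (n + c) + 1 from rfl, Finset.sum_range_succ, ih,
      Finset.sum_range_succ, add_assoc]

theorem sum_range_mul' {M : Type*} [AddCommMonoid M] (f : ℕ → M) (B t : ℕ) :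
    ∑ k ∈ Finset.range (B * t), f k
      = ∑ j ∈ Finset.range B, ∑ a ∈ Finset.range t, f (j * t + a) := by
  induction B with
  | zero => simp
  | succ B ih =>
    rw [show (B + 1) * t = B * t + t by ring, sum_range_add', ih, Finset.sum_range_succ]

/-- The conjugate-partition counting identity:
`∑_{k<B} min(#{n<m : μ n ≥ k+1}, s) = μ 0 + ... + μ (s-1)` for antitone `μ ≥ 0`
supported on `range m` and bounded by `B`, when `s ≤ m`. -/
theorem sum_min_conj {m : ℕ} {μ : ℕ → ℤ} (hA : Antitone μ) (h0 : ∀ n, 0 ≤ μ n)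
    {B : ℕ} (hB : ∀ n, μ n ≤ (B:ℤ)) {s : ℕ} (hs : s ≤ m) :
    ∑ k ∈ Finset.range B,
        ((min (((Finset.range m).filter (fun n => (k:ℤ) + 1 ≤ μ n)).card) s : ℕ) : ℤ)
      = FF μ s := by
  have hstep : ∀ k : ℕ,
      ((min (((Finset.range m).filter (fun n => (k:ℤ) + 1 ≤ μ n)).card) s : ℕ) : ℤ)
        = ∑ n ∈ Finset.range s, (if (k:ℤ) + 1 ≤ μ n then (1:ℤ) else 0) := by
    intro k
    set D := (Finset.range m).filter (fun n => (k:ℤ) + 1 ≤ μ n) with hD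
    have hdc : ∀ a b : ℕ, a ≤ b → b ∈ D → a ∈ D := by
      intro a b hab hb
      simp only [hD, Finset.mem_filter, Finset.mem_range] at hb ⊢
      exact ⟨by omega, le_trans hb.2 (hA hab)⟩
    have hDr : D = Finset.range D.card := downward_closed_eq_range hdc
    have hfil : (Finset.range s).filter (fun n => (k:ℤ) + 1 ≤ μ n)
        = Finset.range (min D.card s) := by
      ext n
      simp only [Finset.mem_filter, Finset.mem_range, lt_min_iff]
      constructor
      · intro ⟨hns, hμ⟩
        refine ⟨?_, hns⟩
        have : n ∈ D := by
          simp only [hD, Finset.mem_filter, Finset.mem_range]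
          exact ⟨by omega, hμ⟩
        rw [hDr] at this
        simpa using this
      · intro ⟨hnD, hns⟩
        have : n ∈ D := by rw [hDr]; simpa using hnD
        simp only [hD, Finset.mem_filter] at this
        exact ⟨hns, this.2⟩
    rw [Finset.sum_boole, hfil]
    simp
  rw [Finset.sum_congr rfl (fun k _ => hstep k), Finset.sum_comm]
  rw [FF]
  apply Finset.sum_congr rfl
  intro n _
  have hfil2 : (Finset.range B).filter (fun k : ℕ => (k:ℤ) + 1 ≤ μ n)
      = Finset.range (μ n).toNat := by
    ext k
    simp only [Finset.mem_filter, Finset.mem_range, Int.lt_toNat]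
    constructor
    · intro ⟨_, h⟩; omega
    · intro h
      have h2 : (k:ℤ) < (B:ℤ) := lt_of_lt_of_le h (hB n)
      constructor
      · exact_mod_cast h2
      · omega
  rw [Finset.sum_boole, hfil2]
  simp [Int.toNat_of_nonneg (h0 n)]

variable {m : ℕ}

def permSetR (y : Fin m → ℤ) : Set (Fin m → ℝ) :=
  {z | ∃ σ : Equiv.Perm (Fin m), z = fun i => (y (σ i) : ℝ)}

def pref (x : Fin m → ℤ) (k : ℕ) : ℤ :=
  ∑ i ∈ Finset.univ.filter (fun i : Fin m => (i : ℕ) < k), x i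

theorem pref_sub (x y : Fin m → ℤ) (k : ℕ) :
    pref y k - pref x k
      = ∑ i ∈ Finset.univ.filter (fun i : Fin m => (i : ℕ) < k), (y i - x i) := by
  rw [pref, pref, ← Finset.sum_sub_distrib]

/-- Hardy–Littlewood–Pólya / Rado: an antitone integer vector whose prefix sums are
dominated by those of an antitone `y` (with equal total sum) lies in the convex hull
of the coordinate permutations of `y`. -/
theorem inner_rado : ∀ (N : ℕ) (x y : Fin m → ℤ), Antitone x → Antitone y →
    (∑ i, (x i - y i).natAbs ≤ N) →
    (∀ k, pref x k ≤ pref y k) → (∑ i, x i = ∑ i, y i) →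
    (fun i => (x i : ℝ)) ∈ convexHull ℝ (permSetR y) := by
  intro N
  induction N with
  | zero =>
    intro x y hx hy hme hpre hsum
    have hxy : x = y := by
      funext i
      have h1 : ∀ i ∈ (Finset.univ : Finset (Fin m)), (x i - y i).natAbs = 0 :=
        Finset.sum_eq_zero_iff.mp (Nat.le_zero.mp hme)
      have := h1 i (Finset.mem_univ i)
      omega
    rw [hxy]
    exact subset_convexHull ℝ _ ⟨1, by simp⟩
  | succ N ih =>
    intro x y hx hy hme hpre hsum
    by_cases hxy : x = y
    · rw [hxy]; exact subset_convexHull ℝ _ ⟨1, by simp⟩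
    have hne : (Finset.univ.filter (fun i : Fin m => x i ≠ y i)).Nonempty := by
      by_contra h
      rw [Finset.not_nonempty_iff_eq_empty, Finset.filter_eq_empty_iff] at h
      exact hxy (funext fun i => not_not.mp (h (Finset.mem_univ i)))
    set j := (Finset.univ.filter (fun i : Fin m => x i ≠ y i)).min' hne with hj
    have hjmem : x j ≠ y j := by
      have := Finset.min'_mem _ hne
      rw [Finset.mem_filter] at this
      exact this.2
    have hjlt : ∀ i : Fin m, i < j → x i = y i := by
      intro i hij
      by_contra h
      have : j ≤ i := Finset.min'_le _ _ (by simp [h])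
      exact absurd hij (not_lt.mpr this)
    have hxyj : x j < y j := by
      have h1 : pref x ((j:ℕ)+1) ≤ pref y ((j:ℕ)+1) := hpre _
      have h2 : pref y ((j:ℕ)+1) - pref x ((j:ℕ)+1) = y j - x j := by
        rw [pref_sub]
        apply Finset.sum_eq_single_of_mem j (by simp)
        intro b hb hbj
        have hbv : (b:ℕ) < (j:ℕ)+1 := by simpa using hb
        have hblt : b < j := by
          rcases lt_or_eq_of_le (Fin.le_def.mpr (by omega : (b:ℕ) ≤ (j:ℕ))) with h | h
          · exact h
          · exact absurd h hbj
        rw [hjlt b hblt]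
        ring
      omega
    have hKne : (Finset.univ.filter (fun i : Fin m => j < i ∧ y i < x i)).Nonempty := by
      by_contra h
      rw [Finset.not_nonempty_iff_eq_empty, Finset.filter_eq_empty_iff] at h
      have hterm : ∀ i ∈ (Finset.univ : Finset (Fin m)), 0 ≤ y i - x i := by
        intro i _
        rcases lt_trichotomy i j with h1 | h1 | h1
        · rw [hjlt i h1]; ring_nf; exact le_refl 0
        · rw [h1]; omega
        · have := h (Finset.mem_univ i)
          have h2 : ¬ (j < i ∧ y i < x i) := by simpa using this
          have h3 : ¬ y i < x i := fun hc => h2 ⟨h1, hc⟩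
          omega
      have hzero : ∑ i, (y i - x i) = 0 := by
        rw [Finset.sum_sub_distrib]
        omega
      have hpos : 0 < ∑ i, (y i - x i) :=
        Finset.sum_pos' hterm ⟨j, Finset.mem_univ j, by omega⟩
      omega
    set K := (Finset.univ.filter (fun i : Fin m => j < i ∧ y i < x i)).min' hKne with hK
    have hKmem : j < K ∧ y K < x K := by
      have := Finset.min'_mem _ hKne
      rw [Finset.mem_filter] at this
      exact this.2
    have hKmin : ∀ i : Fin m, j < i → i < K → x i ≤ y i := by
      intro i hji hiK
      by_contra h
      have : K ≤ i := Finset.min'_le _ _ (by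
        rw [Finset.mem_filter]
        exact ⟨Finset.mem_univ i, hji, by omega⟩)
      exact absurd hiK (not_lt.mpr this)
    -- tie-block endpoints
    have hj'ne : (Finset.univ.filter (fun l : Fin m => j ≤ l ∧ y l = y j)).Nonempty :=
      ⟨j, by simp⟩
    set j' := (Finset.univ.filter (fun l : Fin m => j ≤ l ∧ y l = y j)).max' hj'ne with hj'
    have hj'mem : j ≤ j' ∧ y j' = y j := by
      have := Finset.max'_mem _ hj'ne
      rw [Finset.mem_filter] at this
      exact this.2
    have hj'big : ∀ l : Fin m, j' < l → y l ≤ y j - 1 := by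
      intro l hl
      have h1 : y l ≤ y j := hj'mem.2 ▸ hy (le_of_lt hl)
      have h2 : y l ≠ y j := by
        intro hc
        have : l ≤ j' := Finset.le_max' _ _ (by
          rw [Finset.mem_filter]
          exact ⟨Finset.mem_univ l, le_trans hj'mem.1 (le_of_lt hl), hc⟩)
        exact absurd hl (not_lt.mpr this)
      omega
    have hK'ne : (Finset.univ.filter (fun l : Fin m => l ≤ K ∧ y l = y K)).Nonempty :=
      ⟨K, by simp⟩
    set K' := (Finset.univ.filter (fun l : Fin m => l ≤ K ∧ y l = y K)).min' hK'ne with hK'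
    have hK'mem : K' ≤ K ∧ y K' = y K := by
      have := Finset.min'_mem _ hK'ne
      rw [Finset.mem_filter] at this
      exact this.2
    have hK'small : ∀ l : Fin m, l < K' → y K + 1 ≤ y l := by
      intro l hl
      have h1 : y K ≤ y l := hK'mem.2 ▸ hy (le_of_lt hl)
      have h2 : y l ≠ y K := by
        intro hc
        have : K' ≤ l := Finset.min'_le _ _ (by
          rw [Finset.mem_filter]
          exact ⟨Finset.mem_univ l, le_trans (le_of_lt hl) hK'mem.1, hc⟩)
        exact absurd hl (not_lt.mpr this)
      omega
    have hgap2 : y K + 2 ≤ y j := by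
      have h1 : x K ≤ x j := hx (le_of_lt hKmem.1)
      omega
    have hj'K' : j' < K' := by
      by_contra h
      push_neg at h
      have h1 : y j' ≤ y K' := hy h
      omega
    have hj'K'ne : j' ≠ K' := ne_of_lt hj'K'
    set y' : Fin m → ℤ := fun i => if i = j' then y i - 1 else if i = K' then y i + 1 else y i
      with hy'def
    have hvj' : y' j' = y j - 1 := by simp [hy'def, hj'mem.2]
    have hvK' : y' K' = y K + 1 := by simp [hy'def, hj'K'ne.symm, hK'mem.2]
    have hvo : ∀ i, i ≠ j' → i ≠ K' → y' i = y i := by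
      intro i h1 h2; simp [hy'def, h1, h2]
    have hxj' : x j' ≤ y j - 1 := le_trans (hx hj'mem.1) (by omega)
    have hxK' : y K + 1 ≤ x K' := by
      have := hx hK'mem.1
      omega
    -- y' is antitone
    have hy'anti : Antitone y' := by
      intro a b hab
      by_cases hbj : b = j'
      · subst hbj
        rcases eq_or_lt_of_le hab with rfl | hab'
        · exact le_refl _
        · have haK : a ≠ K' := by
            intro hc
            subst hc
            exact absurd (lt_trans hab' hj'K') (lt_irrefl _)
          have haj : a ≠ j' := ne_of_lt hab'
          rw [hvo a haj haK, hvj']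
          have : y j' ≤ y a := hy (le_of_lt hab')
          omega
      · by_cases hbK : b = K'
        · subst hbK
          rw [hvK']
          by_cases haj : a = j'
          · subst haj; rw [hvj']; omega
          · by_cases haK : a = K'
            · subst haK; rw [hvK']
            · rw [hvo a haj haK]
              have hab' : a < K' := lt_of_le_of_ne hab haK
              exact hK'small a hab'
        · rw [hvo b hbj hbK]
          by_cases haj : a = j'
          · subst haj
            rw [hvj']
            have hbgt : j' < b := lt_of_le_of_ne hab (fun hc => hbj hc.symm)
            exact hj'big b hbgt
          · by_cases haK : a = K'
            · subst haK
              rw [hvK']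
              have hbgt : K' < b := lt_of_le_of_ne hab (fun hc => hbK hc.symm)
              have : y b ≤ y K' := hy (le_of_lt hbgt)
              omega
            · rw [hvo a haj haK]
              exact hy hab
    -- measure decreases by 2
    have hmeasure : ∑ i, (x i - y' i).natAbs + 2 = ∑ i, (x i - y i).natAbs := by
      have hKj' : K' ∈ Finset.univ.erase j' := by
        rw [Finset.mem_erase]; exact ⟨hj'K'ne.symm, Finset.mem_univ _⟩
      have e1 : ∀ z : Fin m → ℤ,
          ∑ i, (x i - z i).natAbs
            = (x j' - z j').natAbs + ((x K' - z K').natAbs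
              + ∑ i ∈ (Finset.univ.erase j').erase K', (x i - z i).natAbs) := by
        intro z
        rw [← Finset.add_sum_erase _ _ (Finset.mem_univ j'), ← Finset.add_sum_erase _ _ hKj']
      rw [e1 y, e1 y']
      have h2 : ∑ i ∈ (Finset.univ.erase j').erase K', (x i - y' i).natAbs
          = ∑ i ∈ (Finset.univ.erase j').erase K', (x i - y i).natAbs := by
        apply Finset.sum_congr rfl
        intro i hi
        rw [Finset.mem_erase, Finset.mem_erase] at hi
        rw [hvo i hi.2.1 hi.1]
      rw [h2, hvj', hvK']
      have hc1 : (x j' - (y j - 1)).natAbs + 1 = (x j' - y j').natAbs := by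
        rw [hj'mem.2]; omega
      have hc2 : (x K' - (y K + 1)).natAbs + 1 = (x K' - y K').natAbs := by
        rw [hK'mem.2]; omega
      omega
    -- prefix sums still dominate
    have hpre' : ∀ k, pref x k ≤ pref y' k := by
      intro k
      have hpt : ∀ i : Fin m,
          y' i = y i + ((if i = K' then 1 else 0) - (if i = j' then 1 else 0)) := by
        intro i
        by_cases h1 : i = j'
        · subst h1
          rw [hvj', hj'mem.2, if_neg hj'K'ne, if_pos rfl]
          ring
        · by_cases h2 : i = K'
          · subst h2
            rw [hvK', hK'mem.2, if_pos rfl, if_neg h1]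
            ring
          · rw [hvo i h1 h2, if_neg h2, if_neg h1]
            ring
      have hdecomp : pref y' k = pref y k
          + ((if (K':ℕ) < k then 1 else 0) - (if (j':ℕ) < k then 1 else 0)) := by
        rw [pref, pref, Finset.sum_congr rfl (fun i _ => hpt i), Finset.sum_add_distrib,
          Finset.sum_sub_distrib]
        congr 2
        · rw [Finset.sum_ite_eq' _ K' (fun _ => (1:ℤ))]
          simp
        · rw [Finset.sum_ite_eq' _ j' (fun _ => (1:ℤ))]
          simp
      by_cases hk1 : (j':ℕ) < k
      · by_cases hk2 : (K':ℕ) < k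
        · rw [hdecomp]
          simp only [hk1, hk2, if_true]
          have := hpre k
          omega
        · have hstrict : pref x k + 1 ≤ pref y k := by
            have hsum1 := pref_sub x y k
            have hterm : ∀ i ∈ Finset.univ.filter (fun i : Fin m => (i:ℕ) < k),
                0 ≤ y i - x i := by
              intro i hi
              have hik : (i:ℕ) < k := by simpa using hi
              have hiK' : i < K' := by
                have h3 : (i:ℕ) < (K':ℕ) := by omega
                exact h3
              rcases lt_trichotomy i j with h1 | h1 | h1
              · rw [hjlt i h1]; ring_nf; exact le_refl 0
              · subst h1; omega
              · have hiK : i < K := lt_of_lt_of_le hiK' hK'mem.1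
                have := hKmin i h1 hiK
                omega
            have hjin : j ∈ Finset.univ.filter (fun i : Fin m => (i:ℕ) < k) := by
              have : (j:ℕ) ≤ (j':ℕ) := hj'mem.1
              simp only [Finset.mem_filter]
              exact ⟨Finset.mem_univ _, by omega⟩
            have hsingle := Finset.single_le_sum hterm hjin
            omega
          rw [hdecomp]
          simp only [hk1, hk2, if_true, if_false]
          omega
      · have hk2 : ¬ (K':ℕ) < k := by
          have : (j':ℕ) < (K':ℕ) := hj'K'
          omega
        rw [hdecomp]
        simp only [hk1, hk2, if_false]
        have := hpre k
        omega
    -- total sums agree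
    have hsum' : ∑ i, x i = ∑ i, y' i := by
      rw [hsum]
      have hpt : ∀ i : Fin m,
          y' i = y i + ((if i = K' then 1 else 0) - (if i = j' then 1 else 0)) := by
        intro i
        by_cases h1 : i = j'
        · subst h1
          rw [hvj', hj'mem.2, if_neg hj'K'ne, if_pos rfl]
          ring
        · by_cases h2 : i = K'
          · subst h2
            rw [hvK', hK'mem.2, if_pos rfl, if_neg h1]
            ring
          · rw [hvo i h1 h2, if_neg h2, if_neg h1]
            ring
      rw [Finset.sum_congr rfl (fun i _ => hpt i), Finset.sum_add_distrib,
        Finset.sum_sub_distrib]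
      rw [Finset.sum_ite_eq' _ K' (fun _ => (1:ℤ)), Finset.sum_ite_eq' _ j' (fun _ => (1:ℤ))]
      simp
    have hmem := ih x y' hx hy'anti (by omega) hpre' hsum'
    -- permutations of y' lie in the hull of permutations of y
    set τ := Equiv.swap j' K' with hτ
    have hd2 : (2:ℝ) ≤ (y j' : ℝ) - (y K' : ℝ) := by
      have : (2:ℤ) ≤ y j' - y K' := by omega
      exact_mod_cast this
    set c : ℝ := ((y j' : ℝ) - (y K' : ℝ))⁻¹ with hc
    have hdpos : (0:ℝ) < (y j' : ℝ) - (y K' : ℝ) := by linarith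
    have hc0 : 0 < c := by positivity
    have hcd : c * ((y j' : ℝ) - (y K' : ℝ)) = 1 := inv_mul_cancel₀ (ne_of_gt hdpos)
    have hc2' : c * 2 ≤ c * ((y j' : ℝ) - (y K' : ℝ)) :=
      mul_le_mul_of_nonneg_left hd2 (le_of_lt hc0)
    have hc1 : c ≤ 1 := by linarith
    have hkey : ∀ i : Fin m, (y' i : ℝ) = (1 - c) * (y i : ℝ) + c * (y (τ i) : ℝ) := by
      intro i
      by_cases h1 : i = j'
      · subst h1
        rw [hvj', hτ]
        rw [Equiv.swap_apply_left]
        have hyx : (y j' : ℝ) = (y j : ℝ) := by exact_mod_cast hj'mem.2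
        push_cast
        rw [← hyx]
        nlinarith [hcd]
      · by_cases h2 : i = K'
        · subst h2
          rw [hvK', hτ]
          rw [Equiv.swap_apply_right]
          have hyx : (y K' : ℝ) = (y K : ℝ) := by exact_mod_cast hK'mem.2
          push_cast
          rw [← hyx]
          nlinarith [hcd]
        · rw [hvo i h1 h2, hτ, Equiv.swap_apply_of_ne_of_ne h1 h2]
          ring
    have hsub : permSetR y' ⊆ convexHull ℝ (permSetR y) := by
      rintro z ⟨σ, rfl⟩
      have hz : (fun i => (y' (σ i) : ℝ))
          = (1 - c) • (fun i => (y (σ i) : ℝ)) + c • (fun i => (y (τ (σ i)) : ℝ)) := by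
        funext i
        simp only [Pi.add_apply, Pi.smul_apply, smul_eq_mul]
        exact hkey (σ i)
      rw [hz]
      have h1 : (fun i => (y (σ i) : ℝ)) ∈ permSetR y := ⟨σ, rfl⟩
      have h2 : (fun i => (y (τ (σ i)) : ℝ)) ∈ permSetR y := ⟨σ.trans τ, rfl⟩
      exact (convex_convexHull ℝ _) (subset_convexHull ℝ _ h1) (subset_convexHull ℝ _ h2)
        (by linarith) (le_of_lt hc0) (by ring)
    exact (convexHull_min hsub (convex_convexHull ℝ _)) hmem

theorem filter_lt_image (k : ℕ) :
    (Finset.univ.filter (fun i : Fin m => (i : ℕ) < k)).image (fun i : Fin m => (i:ℕ))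
      = Finset.range (min k m) := by
  ext n
  simp only [Finset.mem_image, Finset.mem_filter, Finset.mem_univ, true_and,
    Finset.mem_range, lt_min_iff]
  constructor
  · rintro ⟨i, hik, rfl⟩
    exact ⟨hik, i.isLt⟩
  · rintro ⟨hnk, hnm⟩
    exact ⟨⟨n, hnm⟩, hnk, rfl⟩

theorem filter_lt_card (k : ℕ) :
    ((Finset.univ.filter (fun i : Fin m => (i : ℕ) < k)).card) = min k m := by
  have hcard := congrArg Finset.card (filter_lt_image (m := m) k)
  rwa [Finset.card_image_of_injective _ Fin.val_injective, Finset.card_range] at hcard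

theorem pref_min (y : Fin m → ℤ) (k : ℕ) : pref y (min k m) = pref y k := by
  rw [pref, pref]
  apply Finset.sum_congr _ (fun i _ => rfl)
  apply Finset.filter_congr
  intro i _
  have := i.isLt
  simp only [lt_min_iff, eq_iff_iff]
  omega

/-- Rado's theorem (hard direction, integer version): if all subset sums of `x` are
dominated by the corresponding top subset sums of an antitone `y`, with equal totals,
then `x` lies in the convex hull of the permutations of `y`. -/
theorem rado (y : Fin m → ℤ) (hy : Antitone y) (x : Fin m → ℤ)
    (hsum : ∑ i, x i = ∑ i, y i)
    (hdom : ∀ S : Finset (Fin m), ∑ i ∈ S, x i ≤ pref y S.card) :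
    (fun i => (x i : ℝ)) ∈ convexHull ℝ (permSetR y) := by
  classical
  set σ := Tuple.sort (fun i => -x i) with hσ
  have hmono : Monotone ((fun i => -x i) ∘ σ) := Tuple.monotone_sort _
  have hanti : Antitone (x ∘ σ) := by
    intro a b hab
    have := hmono hab
    simp only [Function.comp_apply] at this ⊢
    omega
  have hsum1 : ∑ i, (x ∘ σ) i = ∑ i, y i := by
    rw [← hsum]
    exact Equiv.sum_comp σ x
  have hpre1 : ∀ k, pref (x ∘ σ) k ≤ pref y k := by
    intro k
    have h1 : pref (x ∘ σ) k
        = ∑ i ∈ (Finset.univ.filter (fun i : Fin m => (i : ℕ) < k)).image σ, x i := by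
      rw [pref, Finset.sum_image (fun a _ b _ h => σ.injective h)]
      rfl
    have h2 := hdom ((Finset.univ.filter (fun i : Fin m => (i : ℕ) < k)).image σ)
    rw [Finset.card_image_of_injective _ σ.injective, filter_lt_card, pref_min] at h2
    rw [h1]
    exact h2
  have hmem := inner_rado (∑ i, ((x ∘ σ) i - y i).natAbs) (x ∘ σ) y hanti hy le_rfl hpre1 hsum1
  -- transfer back through the permutation σ
  set E : (Fin m → ℝ) →ₗ[ℝ] (Fin m → ℝ) := LinearMap.funLeft ℝ ℝ (⇑σ⁻¹) with hE
  have hEapp : ∀ (z : Fin m → ℝ), E z = fun i => z (σ⁻¹ i) := fun z => rfl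
  have hEx : E (fun i => ((x ∘ σ) i : ℝ)) = fun i => (x i : ℝ) := by
    funext i
    rw [hEapp]
    simp only [Function.comp_apply]
    congr 1
    exact congrArg x (σ.apply_symm_apply i)
  have hEsub : E '' permSetR y ⊆ permSetR y := by
    rintro z ⟨w, ⟨π, rfl⟩, rfl⟩
    exact ⟨(σ⁻¹ : Equiv.Perm (Fin m)).trans π, rfl⟩
  have himg : E (fun i => ((x ∘ σ) i : ℝ)) ∈ E '' (convexHull ℝ (permSetR y)) :=
    Set.mem_image_of_mem _ hmem
  rw [E.image_convexHull] at himg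
  rw [hEx] at himg
  exact convexHull_mono hEsub himg

end PermIDP

open scoped Pointwise

/-- The `λ`-permutohedron `P_λ^m ⊂ ℝ^m`: the convex hull of all coordinate
permutations of the vector `(λ_1, ..., λ_m)`. -/
def permPoly (m : ℕ) (lam : Fin m → ℕ) : Set (Fin m → ℝ) :=
  convexHull ℝ {x : Fin m → ℝ | ∃ σ : Equiv.Perm (Fin m), x = fun i => (lam (σ i) : ℝ)}

/-- The `λ`-permutohedron has the integer decomposition property: for every positive
integer `t`, every lattice point of `t • P_λ^m` is a sum of `t` lattice points of `P_λ^m`. -/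
theorem permutohedron_IDP (m : ℕ) (lam : Fin m → ℕ) (hlam : Antitone lam)
    (t : ℕ) (ht : 1 ≤ t) (p : Fin m → ℤ)
    (hp : (fun i => (p i : ℝ)) ∈ (t : ℝ) • permPoly m lam) :
    ∃ v : Fin t → Fin m → ℤ,
      (∀ a : Fin t, (fun i => (v a i : ℝ)) ∈ permPoly m lam) ∧ p = ∑ a, v a := by
  classical
  open PermIDP in
  set y : Fin m → ℤ := fun i => (lam i : ℤ) with hydef
  have hyanti : Antitone y := fun a b hab => by
    simp only [hydef]
    exact_mod_cast hlam hab
  set lz : ℕ → ℤ := fun n => if h : n < m then (lam ⟨n, h⟩ : ℤ) else 0 with hlzdef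
  have hlz0 : ∀ n, 0 ≤ lz n := by
    intro n; simp only [hlzdef]; split <;> positivity
  have hlzval : ∀ i : Fin m, lz (i : ℕ) = y i := by
    intro i
    simp only [hlzdef, hydef, i.isLt, dif_pos]
  have hlzanti : Antitone lz := by
    intro a b hab
    simp only [hlzdef]
    by_cases hb : b < m
    · have ha : a < m := lt_of_le_of_lt hab hb
      rw [dif_pos hb, dif_pos ha]
      exact_mod_cast hlam (show (⟨a, ha⟩ : Fin m) ≤ ⟨b, hb⟩ from hab)
    · rw [dif_neg hb]
      split <;> positivity
  have hlzsupp : ∀ n, m ≤ n → lz n = 0 := by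
    intro n hn; simp only [hlzdef]; rw [dif_neg (by omega)]
  have hfin_sum : ∀ T : Finset (Fin m),
      ∑ i ∈ T, y i = ∑ n ∈ T.image (fun i : Fin m => (i:ℕ)), lz n := by
    intro T
    rw [Finset.sum_image (fun a _ b _ h => Fin.val_injective h)]
    exact (Finset.sum_congr rfl (fun i _ => (hlzval i).symm))
  have himg_card : ∀ T : Finset (Fin m), (T.image (fun i : Fin m => (i:ℕ))).card = T.card :=
    fun T => Finset.card_image_of_injective _ Fin.val_injective
  have hybound : ∀ T : Finset (Fin m), ∑ i ∈ T, y i ≤ PermIDP.FF lz T.card := by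
    intro T
    rw [hfin_sum T, ← himg_card T]
    exact PermIDP.subsetSum_le hlzanti hlz0 _
  have huniv_img : (Finset.univ : Finset (Fin m)).image (fun i : Fin m => (i:ℕ))
      = Finset.range m := by
    ext n
    simp only [Finset.mem_image, Finset.mem_univ, true_and, Finset.mem_range]
    constructor
    · rintro ⟨i, rfl⟩; exact i.isLt
    · intro h; exact ⟨⟨n, h⟩, rfl⟩
  have hytot : ∑ i, y i = PermIDP.FF lz m := by
    rw [hfin_sum, huniv_img]; rfl
  -- extract the point z with p = t • z
  obtain ⟨z, hz, hzeq⟩ := Set.mem_smul_set.mp hp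
  have hzi : ∀ i, (p i : ℝ) = (t : ℝ) * z i := by
    intro i
    have := congrFun hzeq i
    simpa using this.symm
  have hzV : z ∈ convexHull ℝ
      {x : Fin m → ℝ | ∃ σ : Equiv.Perm (Fin m), x = fun i => (lam (σ i) : ℝ)} := hz
  have hlin : ∀ T : Finset (Fin m), IsLinearMap ℝ (fun w : Fin m → ℝ => ∑ i ∈ T, w i) := by
    intro T
    constructor
    · intro u w; simp [Finset.sum_add_distrib]
    · intro c w; simp [Finset.mul_sum, smul_eq_mul]
  have hvert_sum : ∀ (π : Equiv.Perm (Fin m)) (T : Finset (Fin m)),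
      ∑ i ∈ T, ((lam (π i) : ℝ)) = ((∑ i ∈ T, y (π i) : ℤ) : ℝ) := by
    intro π T
    push_cast
    apply Finset.sum_congr rfl
    intro i _
    simp [hydef]
  -- subset-sum inequalities for z over the hull
  have hzineq : ∀ T : Finset (Fin m), ∑ i ∈ T, z i ≤ ((PermIDP.FF lz T.card : ℤ) : ℝ) := by
    intro T
    refine convexHull_min ?_ (convex_halfSpace_le (hlin T) _) hzV
    rintro x ⟨π, rfl⟩
    show ∑ i ∈ T, ((lam (π i) : ℝ)) ≤ ((PermIDP.FF lz T.card : ℤ) : ℝ)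
    rw [hvert_sum π T]
    have hZ : ∑ i ∈ T, y (π i) ≤ PermIDP.FF lz T.card := by
      have h := hybound (T.image π)
      rw [Finset.sum_image (fun a _ b _ h => π.injective h),
        Finset.card_image_of_injective _ π.injective] at h
      exact h
    exact_mod_cast hZ
  have hztot : ∑ i, z i = ((PermIDP.FF lz m : ℤ) : ℝ) := by
    refine convexHull_min ?_ (convex_hyperplane (hlin Finset.univ) _) hzV
    rintro x ⟨π, rfl⟩
    show ∑ i, ((lam (π i) : ℝ)) = ((PermIDP.FF lz m : ℤ) : ℝ)
    rw [hvert_sum π Finset.univ]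
    have hZ : ∑ i, y (π i) = PermIDP.FF lz m := by
      rw [Equiv.sum_comp π y]
      exact hytot
    exact_mod_cast hZ
  -- integer Q-conditions on p
  have hQfin : ∀ T : Finset (Fin m), ∑ i ∈ T, p i ≤ (t:ℤ) * PermIDP.FF lz T.card := by
    intro T
    have h1 : ∑ i ∈ T, (p i : ℝ) = (t:ℝ) * ∑ i ∈ T, z i := by
      rw [Finset.mul_sum]
      exact Finset.sum_congr rfl (fun i _ => hzi i)
    have h2 : (t:ℝ) * ∑ i ∈ T, z i ≤ (t:ℝ) * ((PermIDP.FF lz T.card : ℤ) : ℝ) :=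
      mul_le_mul_of_nonneg_left (hzineq T) (by positivity)
    have h3 : ((∑ i ∈ T, p i : ℤ) : ℝ) ≤ (((t:ℤ) * PermIDP.FF lz T.card : ℤ) : ℝ) := by
      push_cast
      push_cast at h1 h2
      linarith
    exact_mod_cast h3
  have hTotfin : ∑ i, p i = (t:ℤ) * PermIDP.FF lz m := by
    have h1 : ∑ i, (p i : ℝ) = (t:ℝ) * ∑ i, z i := by
      rw [Finset.mul_sum]
      exact Finset.sum_congr rfl (fun i _ => hzi i)
    have h3 : ((∑ i, p i : ℤ) : ℝ) = (((t:ℤ) * PermIDP.FF lz m : ℤ) : ℝ) := by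
      push_cast
      push_cast at h1 hztot
      rw [h1, hztot]
    exact_mod_cast h3
  -- p is nonnegative
  have hp0 : ∀ i : Fin m, 0 ≤ p i := by
    intro i
    have hm1 : 1 ≤ m := by
      have := i.isLt
      omega
    have h1 := hQfin (Finset.univ.erase i)
    have h2 : (Finset.univ.erase i).card = m - 1 := by
      rw [Finset.card_erase_of_mem (Finset.mem_univ i), Finset.card_univ, Fintype.card_fin]
    have h3 : p i + ∑ j ∈ Finset.univ.erase i, p j = ∑ j, p j :=
      Finset.add_sum_erase _ _ (Finset.mem_univ i)
    have h4 : PermIDP.FF lz (m - 1) + lz (m - 1) = PermIDP.FF lz m := by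
      conv_rhs => rw [show m = m - 1 + 1 by omega]
      rw [PermIDP.FF_succ]
    have h5 : (t:ℤ) * PermIDP.FF lz m
        = (t:ℤ) * PermIDP.FF lz (m - 1) + (t:ℤ) * lz (m - 1) := by
      rw [← h4]; ring
    have h6 : (0:ℤ) ≤ (t:ℤ) * lz (m - 1) := mul_nonneg (by positivity) (hlz0 _)
    rw [h2] at h1
    omega
  -- ℕ-indexed data for the layer decomposition
  set q : ℕ → ℤ := fun n => if h : n < m then p ⟨n, h⟩ else 0 with hqdef
  have hq0 : ∀ n, 0 ≤ q n := by
    intro n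
    simp only [hqdef]
    split
    · exact hp0 _
    · exact le_refl 0
  have hqval : ∀ i : Fin m, q (i:ℕ) = p i := by
    intro i; simp only [hqdef, i.isLt, dif_pos]
  set Λ : ℕ → ℤ := fun n => (t:ℤ) * lz n with hΛdef
  have hΛanti : Antitone Λ := fun a b hab =>
    mul_le_mul_of_nonneg_left (hlzanti hab) (by positivity)
  have hΛ0 : ∀ n, 0 ≤ Λ n := fun n => mul_nonneg (by positivity) (hlz0 n)
  have hΛsupp : ∀ n, m ≤ n → Λ n = 0 := fun n hn => by
    simp only [hΛdef]; rw [hlzsupp n hn, mul_zero]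
  have hFFΛ : ∀ k, PermIDP.FF Λ k = (t:ℤ) * PermIDP.FF lz k := by
    intro k
    rw [PermIDP.FF, PermIDP.FF, Finset.mul_sum]
  set B : ℕ := (lz 0).toNat with hBdef
  have hlzB : ∀ n, lz n ≤ (B:ℤ) := by
    intro n
    have h1 : lz n ≤ lz 0 := hlzanti (Nat.zero_le n)
    have h2 : ((lz 0).toNat : ℤ) = lz 0 := Int.toNat_of_nonneg (hlz0 0)
    simp only [hBdef]
    omega
  have hΛB : ∀ n, Λ n ≤ ((B * t : ℕ) : ℤ) := by
    intro n
    have h1 : (t:ℤ) * lz n ≤ (t:ℤ) * B := mul_le_mul_of_nonneg_left (hlzB n) (by positivity)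
    have h2 : ((B * t : ℕ) : ℤ) = (t:ℤ) * B := by push_cast; ring
    simp only [hΛdef]
    omega
  have hconv : ∀ S : Finset ℕ, S ⊆ Finset.range m →
      ∃ T : Finset (Fin m), T.card = S.card ∧ ∑ n ∈ S, q n = ∑ i ∈ T, p i := by
    intro S hS
    have himg : (Finset.univ.filter (fun i : Fin m => (i:ℕ) ∈ S)).image
        (fun i : Fin m => (i:ℕ)) = S := by
      ext n
      simp only [Finset.mem_image, Finset.mem_filter, Finset.mem_univ, true_and]
      constructor
      · rintro ⟨i, hiS, rfl⟩; exact hiS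
      · intro hn
        have hnm : n < m := Finset.mem_range.mp (hS hn)
        exact ⟨⟨n, hnm⟩, hn, rfl⟩
    refine ⟨Finset.univ.filter (fun i : Fin m => (i:ℕ) ∈ S), ?_, ?_⟩
    · conv_rhs => rw [← himg]
      exact (himg_card _).symm
    · conv_lhs => rw [← himg]
      rw [Finset.sum_image (fun a _ b _ h => Fin.val_injective h)]
      exact Finset.sum_congr rfl (fun i _ => hqval i)
  have hQn : ∀ S : Finset ℕ, S ⊆ Finset.range m → ∑ n ∈ S, q n ≤ PermIDP.FF Λ S.card := by
    intro S hS
    obtain ⟨T, hTc, hTs⟩ := hconv S hS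
    rw [hTs, ← hTc, hFFΛ]
    exact hQfin T
  have hTotn : ∑ n ∈ Finset.range m, q n = PermIDP.FF Λ m := by
    rw [← huniv_img, Finset.sum_image (fun a _ b _ h => Fin.val_injective h),
      Finset.sum_congr rfl (fun i _ => hqval i), hTotfin, hFFΛ]
  obtain ⟨χ, hχsub, hχcard, hχsum⟩ :=
    PermIDP.layers (B * t) Λ hΛanti hΛ0 hΛsupp hΛB q hq0 hQn hTotn
  -- the conjugate filters for the classes mod t
  have hconj : ∀ (j a : ℕ), a < t →
      ((Finset.range m).filter (fun n => ((j * t + a : ℕ):ℤ) + 1 ≤ Λ n))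
        = ((Finset.range m).filter (fun n => (j:ℤ) + 1 ≤ lz n)) := by
    intro j a ha
    apply Finset.filter_congr
    intro n _
    simp only [hΛdef, eq_iff_iff]
    have h0n := hlz0 n
    have hta : (a:ℤ) + 1 ≤ (t:ℤ) := by exact_mod_cast ha
    have h3 : ((j * t + a : ℕ):ℤ) = (j:ℤ) * t + a := by push_cast; ring
    have h4 : (j:ℤ) * t = (t:ℤ) * j := mul_comm _ _
    constructor
    · intro h
      by_contra hc
      push_neg at hc
      have h2 : (t:ℤ) * lz n ≤ (t:ℤ) * j :=
        mul_le_mul_of_nonneg_left (by omega) (by positivity)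
      omega
    · intro h
      have h2 : (t:ℤ) * ((j:ℤ) + 1) ≤ (t:ℤ) * lz n :=
        mul_le_mul_of_nonneg_left h (by positivity)
      have h5 : (t:ℤ) * ((j:ℤ)+1) = (j:ℤ) * t + t := by ring
      omega
  -- define the parts
  set v : Fin t → Fin m → ℤ := fun a i =>
    ∑ j ∈ Finset.range B, (if (i:ℕ) ∈ χ (j * t + (a:ℕ)) then (1:ℤ) else 0) with hvdef
  have hvsum : ∀ i : Fin m, ∑ a : Fin t, v a i = p i := by
    intro i
    have h1 : ∑ a : Fin t, v a i = ∑ a ∈ Finset.range t,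
        ∑ j ∈ Finset.range B, (if (i:ℕ) ∈ χ (j * t + a) then (1:ℤ) else 0) := by
      simp only [hvdef]
      exact Fin.sum_univ_eq_sum_range
        (fun a => ∑ j ∈ Finset.range B, (if (i:ℕ) ∈ χ (j * t + a) then (1:ℤ) else 0)) t
    rw [h1, Finset.sum_comm,
      ← PermIDP.sum_range_mul' (fun k => if (i:ℕ) ∈ χ k then (1:ℤ) else 0) B t,
      ← hχsum (i:ℕ) i.isLt, hqval i]
  have hTcard_le : ∀ T : Finset (Fin m), T.card ≤ m := by
    intro T
    have := Finset.card_le_univ T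
    simpa [Finset.card_univ] using this
  have hpart_le : ∀ (a : Fin t) (T : Finset (Fin m)),
      ∑ i ∈ T, v a i ≤ PermIDP.FF lz T.card := by
    intro a T
    have h1 : ∑ i ∈ T, v a i = ∑ j ∈ Finset.range B,
        ∑ i ∈ T, (if (i:ℕ) ∈ χ (j * t + (a:ℕ)) then (1:ℤ) else 0) := by
      simp only [hvdef]
      exact Finset.sum_comm
    have h2 : ∀ j, ∑ i ∈ T, (if (i:ℕ) ∈ χ (j * t + (a:ℕ)) then (1:ℤ) else 0)
        ≤ ((min ((Finset.range m).filter (fun n => (j:ℤ) + 1 ≤ lz n)).card T.card : ℕ) : ℤ) := by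
      intro j
      rw [Finset.sum_boole]
      have hle1 : (T.filter (fun i : Fin m => (i:ℕ) ∈ χ (j * t + (a:ℕ)))).card ≤ T.card :=
        Finset.card_filter_le _ _
      have hle2 : (T.filter (fun i : Fin m => (i:ℕ) ∈ χ (j * t + (a:ℕ)))).card
          ≤ ((Finset.range m).filter (fun n => (j:ℤ) + 1 ≤ lz n)).card := by
        rw [← hconj j (a:ℕ) a.isLt, ← hχcard]
        have hsubm : (T.filter (fun i : Fin m => (i:ℕ) ∈ χ (j * t + (a:ℕ)))).image
            (fun i : Fin m => (i:ℕ)) ⊆ χ (j * t + (a:ℕ)) := by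
          intro n hn
          simp only [Finset.mem_image, Finset.mem_filter] at hn
          obtain ⟨i, ⟨_, hi⟩, rfl⟩ := hn
          exact hi
        have := Finset.card_le_card hsubm
        rwa [himg_card] at this
      have hmin : (T.filter (fun i : Fin m => (i:ℕ) ∈ χ (j * t + (a:ℕ)))).card
          ≤ min ((Finset.range m).filter (fun n => (j:ℤ) + 1 ≤ lz n)).card T.card :=
        le_min hle2 hle1
      exact_mod_cast hmin
    calc ∑ i ∈ T, v a i
        ≤ ∑ j ∈ Finset.range B,
          ((min ((Finset.range m).filter (fun n => (j:ℤ) + 1 ≤ lz n)).card T.card : ℕ) : ℤ) := by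
          rw [h1]; exact Finset.sum_le_sum (fun j _ => h2 j)
      _ = PermIDP.FF lz T.card := PermIDP.sum_min_conj hlzanti hlz0 hlzB (hTcard_le T)
  have hpart_tot : ∀ a : Fin t, ∑ i, v a i = PermIDP.FF lz m := by
    intro a
    have h1 : ∑ i, v a i = ∑ j ∈ Finset.range B,
        ∑ i : Fin m, (if (i:ℕ) ∈ χ (j * t + (a:ℕ)) then (1:ℤ) else 0) := by
      simp only [hvdef]
      exact Finset.sum_comm
    have h2 : ∀ j, ∑ i : Fin m, (if (i:ℕ) ∈ χ (j * t + (a:ℕ)) then (1:ℤ) else 0)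
        = ((min ((Finset.range m).filter (fun n => (j:ℤ) + 1 ≤ lz n)).card m : ℕ) : ℤ) := by
      intro j
      rw [Finset.sum_boole]
      have himgf : (Finset.univ.filter (fun i : Fin m => (i:ℕ) ∈ χ (j * t + (a:ℕ)))).image
          (fun i : Fin m => (i:ℕ)) = χ (j * t + (a:ℕ)) := by
        ext n
        simp only [Finset.mem_image, Finset.mem_filter, Finset.mem_univ, true_and]
        constructor
        · rintro ⟨i, hi, rfl⟩; exact hi
        · intro hn
          have hnm : n < m := Finset.mem_range.mp (hχsub _ hn)
          exact ⟨⟨n, hnm⟩, hn, rfl⟩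
      have hcard : (Finset.univ.filter (fun i : Fin m => (i:ℕ) ∈ χ (j * t + (a:ℕ)))).card
          = (χ (j * t + (a:ℕ))).card := by
        rw [← himg_card (Finset.univ.filter (fun i : Fin m => (i:ℕ) ∈ χ (j * t + (a:ℕ)))), himgf]
      have hfle : ((Finset.range m).filter (fun n => (j:ℤ) + 1 ≤ lz n)).card ≤ m := by
        have := Finset.card_filter_le (Finset.range m) (fun n => (j:ℤ) + 1 ≤ lz n)
        simpa using this
      rw [hcard, hχcard, hconj j (a:ℕ) a.isLt, min_eq_left hfle]
    rw [h1, Finset.sum_congr rfl (fun j _ => h2 j),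
      PermIDP.sum_min_conj hlzanti hlz0 hlzB (le_refl m)]
  -- prefix sums of y agree with FF lz
  have hpref_eq : ∀ s : ℕ, s ≤ m → PermIDP.pref y s = PermIDP.FF lz s := by
    intro s hs
    rw [PermIDP.pref, hfin_sum, PermIDP.filter_lt_image s, min_eq_left hs]
    rfl
  have hmem : ∀ a : Fin t, (fun i => ((v a i : ℤ) : ℝ)) ∈ convexHull ℝ (PermIDP.permSetR y) := by
    intro a
    apply PermIDP.rado y hyanti (v a)
    · rw [hpart_tot a, hytot]
    · intro S
      rw [hpref_eq S.card (hTcard_le S)]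
      exact hpart_le a S
  have hsets : PermIDP.permSetR y
      = {x : Fin m → ℝ | ∃ σ : Equiv.Perm (Fin m), x = fun i => (lam (σ i) : ℝ)} := by
    ext w
    constructor
    · rintro ⟨σ, rfl⟩
      exact ⟨σ, by funext i; simp [hydef]⟩
    · rintro ⟨σ, rfl⟩
      exact ⟨σ, by funext i; simp [hydef]⟩
  refine ⟨v, ?_, ?_⟩
  · intro a
    have h := hmem a
    rw [hsets] at h
    exact h
  · funext i
    rw [Finset.sum_apply]
    exact (hvsum i).symm
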